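/- Let G be a topological group, m a natural number, and for each i : Fin m let X i be a topological space equipped with a continuous G-action; let G act diagonally on the product Π i, X i. Let P be a topological space and c : P → Set (Fin m) an arbitrary function. Let r₁ be the equivalence relation on (Π i, X i) × P defined by (x,p) r₁ (y,q) iff p = q and x i = y i for every i ∉ c p, and let r₂ be the relation on ((Π i, X i)/G) × P defined by ([x],p) r₂ ([y],q) iff p = q and there exists g : G with g • (x i) = y i for every i ∉ c p. Then r₂ is a well-defined equivalence relation, G acts on the quotient ((Π i, X i) × P)/r₁ by g • [(x,p)] = [(g • x, p)], and the map h : ((((Π i, X i)/G) × P)/r₂) → (((Π i, X i) × P)/r₁)/G sending the class of ([x],p) to the class of the class of (x,p) is well defined and is a homeomorphism. -/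

import Mathlib

/-- The equivalence relation `∼₁` on `(Π i, X i) × P`:
`(x,p) ∼₁ (y,q)` iff `p = q` and `x i = y i` for every `i ∉ c p`. -/
def r1Setoid {m : ℕ} (X : Fin m → Type*) (P : Type*) (c : P → Set (Fin m)) :
    Setoid ((∀ i, X i) × P) where
  r a b := a.2 = b.2 ∧ ∀ i ∉ c a.2, a.1 i = b.1 i
  iseqv := by
    constructor
    · exact fun a => ⟨rfl, fun i _ => rfl⟩
    · rintro ⟨x, p⟩ ⟨y, q⟩ ⟨h1, h2⟩
      dsimp only at h1 h2 ⊢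
      subst h1
      exact ⟨rfl, fun i hi => (h2 i hi).symm⟩
    · rintro ⟨x, p⟩ ⟨y, q⟩ ⟨z, s⟩ ⟨h1, h2⟩ ⟨h3, h4⟩
      dsimp only at h1 h2 h3 h4 ⊢
      subst h1; subst h3
      exact ⟨rfl, fun i hi => (h2 i hi).trans (h4 i hi)⟩

section DJ

variable {G : Type*} [Group G] {m : ℕ} {X : Fin m → Type*}
    [∀ i, MulAction G (X i)] {P : Type*} {c : P → Set (Fin m)}

/-- Transfer of the partial-orbit property across representatives. -/
theorem dj_transfer {s : Set (Fin m)} {x x' y y' : ∀ i, X i}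
    (hx : x' ∈ MulAction.orbit G x) (hy : y' ∈ MulAction.orbit G y)
    (h : ∃ g : G, ∀ i ∉ s, g • x i = y i) :
    ∃ g : G, ∀ i ∉ s, g • x' i = y' i := by
  obtain ⟨g₁, hg₁⟩ := hx
  obtain ⟨g₂, hg₂⟩ := hy
  obtain ⟨g, hg⟩ := h
  refine ⟨g₂ * g * g₁⁻¹, fun i hi => ?_⟩
  have hx' : x' i = g₁ • x i := by rw [← hg₁]; rfl
  have hy' : y' i = g₂ • y i := by rw [← hg₂]; rfl
  rw [hx', hy', ← hg i hi, mul_smul, mul_smul, inv_smul_smul]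

variable (G X P c) in
/-- The relation `∼₂` on `((Π i, X i)/G) × P`. -/
def s2Setoid : Setoid (Quotient (MulAction.orbitRel G (∀ i, X i)) × P) where
  r a b := a.2 = b.2 ∧ ∀ x y : ∀ i, X i, a.1 = ⟦x⟧ → b.1 = ⟦y⟧ →
    ∃ g : G, ∀ i ∉ c a.2, g • x i = y i
  iseqv := by
    constructor
    · rintro ⟨q, p⟩
      refine ⟨rfl, fun x y hx hy => ?_⟩
      have : (⟦x⟧ : Quotient (MulAction.orbitRel G (∀ i, X i))) = ⟦y⟧ := hx.symm.trans hy
      exact dj_transfer (Quotient.exact this) (MulAction.mem_orbit_self y) ⟨1, fun i _ => one_smul _ _⟩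
    · rintro ⟨q, p⟩ ⟨q', p'⟩ ⟨h1, h2⟩
      dsimp only at h1 h2 ⊢
      subst h1
      refine ⟨rfl, fun x y hx hy => ?_⟩
      obtain ⟨g, hg⟩ := h2 y x hy hx
      exact ⟨g⁻¹, fun i hi => by rw [← hg i hi, inv_smul_smul]⟩
    · rintro ⟨q, p⟩ ⟨q', p'⟩ ⟨q'', p''⟩ ⟨h1, h2⟩ ⟨h3, h4⟩
      dsimp only at h1 h2 h3 h4 ⊢
      subst h1; subst h3
      refine ⟨rfl, fun x z hx hz => ?_⟩
      obtain ⟨y, hy⟩ := Quotient.exists_rep q'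
      obtain ⟨g, hg⟩ := h2 x y hx hy.symm
      obtain ⟨g', hg'⟩ := h4 y z hy.symm hz
      exact ⟨g' * g, fun i hi => by rw [mul_smul, hg i hi, hg' i hi]⟩

theorem s2Setoid_iff (x y : ∀ i, X i) (p q : P) :
    (s2Setoid G X P c).r (⟦x⟧, p) (⟦y⟧, q) ↔ p = q ∧ ∃ g : G, ∀ i ∉ c p, g • x i = y i := by
  constructor
  · rintro ⟨h1, h2⟩
    exact ⟨h1, h2 x y rfl rfl⟩
  · rintro ⟨h1, h2⟩
    refine ⟨h1, fun x' y' hx hy => ?_⟩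
    exact dj_transfer (Quotient.exact hx.symm) (Quotient.exact hy.symm) h2

variable (G X P c) in
/-- The `G`-action on `((Π i, X i) × P)/∼₁`. -/
def r1Act : MulAction G (Quotient (r1Setoid X P c)) where
  smul g := Quotient.map (fun a => (g • a.1, a.2)) (by
    rintro ⟨x, p⟩ ⟨y, q⟩ ⟨h1, h2⟩
    dsimp only at h1 h2 ⊢
    exact ⟨h1, fun i hi => by show g • x i = g • y i; rw [h2 i hi]⟩)
  one_smul := by
    rintro ⟨⟨x, p⟩⟩
    show Quotient.map _ _ (Quotient.mk _ (x, p)) = _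
    simp only [Quotient.map_mk, one_smul]
    rfl
  mul_smul g g' := by
    rintro ⟨⟨x, p⟩⟩
    show Quotient.map _ _ (Quotient.mk _ (x, p)) =
      Quotient.map _ _ (Quotient.map _ _ (Quotient.mk _ (x, p)))
    simp only [Quotient.map_mk, mul_smul]

theorem r1Act_smul (g : G) (x : ∀ i, X i) (p : P) :
    (r1Act G X P c).smul g (Quotient.mk (r1Setoid X P c) (x, p)) =
      Quotient.mk (r1Setoid X P c) (g • x, p) := rfl

end DJ

section DJ2
open Topology

variable (G : Type*) [Group G] [TopologicalSpace G] [IsTopologicalGroup G]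
    {m : ℕ} (X : Fin m → Type*) [∀ i, TopologicalSpace (X i)]
    [∀ i, MulAction G (X i)] [∀ i, ContinuousSMul G (X i)]
    (P : Type*) [TopologicalSpace P] (c : P → Set (Fin m))

/-- The orbit relation of the induced action on `((Π i, X i) × P)/∼₁`. -/
def djR : Quotient (r1Setoid X P c) → Quotient (r1Setoid X P c) → Prop :=
  fun a b => ∃ g : G, (r1Act G X P c).smul g a = b

/-- The underlying equivalence of the identification homeomorphism. -/
def djEquiv : Quotient (s2Setoid G X P c) ≃ Quot (djR G X P c) where
  toFun := Quotient.lift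
    (fun a : Quotient (MulAction.orbitRel G (∀ i, X i)) × P =>
      Quotient.liftOn a.1
        (fun x => Quot.mk (djR G X P c) (Quotient.mk (r1Setoid X P c) (x, a.2)))
        (by
          intro x y (hxy : x ∈ MulAction.orbit G y)
          obtain ⟨g₀, hg₀⟩ := hxy
          refine Quot.sound ⟨g₀⁻¹, ?_⟩
          rw [r1Act_smul, ← hg₀, inv_smul_smul]))
    (by
      rintro ⟨q, p⟩ ⟨q', p'⟩ hrel
      obtain ⟨x, rfl⟩ := Quotient.exists_rep q
      obtain ⟨y, rfl⟩ := Quotient.exists_rep q'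
      obtain ⟨rfl, g, hg⟩ := (s2Setoid_iff x y p p').mp hrel
      refine Quot.sound ⟨g, ?_⟩
      rw [r1Act_smul]
      exact Quotient.sound ⟨rfl, fun i hi => hg i hi⟩)
  invFun := Quot.lift
    (Quotient.lift
      (fun a : (∀ i, X i) × P => Quotient.mk (s2Setoid G X P c) (⟦a.1⟧, a.2))
      (by
        rintro ⟨x, p⟩ ⟨y, q⟩ ⟨h1, h2⟩
        dsimp only at h1 h2 ⊢
        subst h1
        exact Quotient.sound ((s2Setoid_iff x y p p).mpr
          ⟨rfl, 1, fun i hi => by rw [one_smul, h2 i hi]⟩)))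
    (by
      refine fun a b hab => ?_
      obtain ⟨⟨x, p⟩, rfl⟩ := Quotient.exists_rep a
      obtain ⟨g, rfl⟩ := hab
      rw [r1Act_smul]
      exact Quotient.sound ((s2Setoid_iff x (g • x) p p).mpr
        ⟨rfl, g, fun i _ => rfl⟩))
  left_inv := by
    refine Quotient.ind ?_
    rintro ⟨q, p⟩
    obtain ⟨x, rfl⟩ := Quotient.exists_rep q
    rfl
  right_inv := by
    refine Quot.ind ?_
    refine Quotient.ind ?_
    rintro ⟨x, p⟩
    rfl

theorem djPi1 : IsQuotientMap (fun a : (∀ i, X i) × P =>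
    Quotient.mk (s2Setoid G X P c) (⟦a.1⟧, a.2)) :=
  isQuotientMap_quotient_mk'.comp
    ((MulAction.isOpenQuotientMap_quotientMk.prodMap IsOpenQuotientMap.id).isQuotientMap)

theorem djPi2 : IsQuotientMap (fun a : (∀ i, X i) × P =>
    Quot.mk (djR G X P c) (Quotient.mk (r1Setoid X P c) a)) :=
  isQuotientMap_quot_mk.comp isQuotientMap_quotient_mk'

/-- The identification homeomorphism. -/
def djHomeo : Quotient (s2Setoid G X P c) ≃ₜ Quot (djR G X P c) where
  toEquiv := djEquiv G X P c
  continuous_toFun := (djPi1 G X P c).continuous_iff.mpr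
    (continuous_quot_mk.comp continuous_quotient_mk')
  continuous_invFun := (djPi2 G X P c).continuous_iff.mpr
    (continuous_quotient_mk'.comp
      ((continuous_quotient_mk'.comp continuous_fst).prodMk continuous_snd))

end DJ2


/-- Davis–Januszkiewicz type identification lemma: the relation `∼₂` on
`((Π i, X i)/G) × P` is a well-defined equivalence relation, `G` acts on the
quotient `((Π i, X i) × P)/∼₁` by `g • [(x,p)] = [(g • x, p)]`, and the map
sending the class of `([x],p)` to the class of the class of `(x,p)` is a
well-defined homeomorphism. -/
theorem stmt0 (G : Type*) [Group G] [TopologicalSpace G] [IsTopologicalGroup G]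
    (m : ℕ) (X : Fin m → Type*) [∀ i, TopologicalSpace (X i)]
    [∀ i, MulAction G (X i)] [∀ i, ContinuousSMul G (X i)]
    (P : Type*) [TopologicalSpace P] (c : P → Set (Fin m)) :
    ∃ s₂ : Setoid (Quotient (MulAction.orbitRel G (∀ i, X i)) × P),
      (∀ (x y : ∀ i, X i) (p q : P),
        s₂.r (Quotient.mk (MulAction.orbitRel G (∀ i, X i)) x, p)
             (Quotient.mk (MulAction.orbitRel G (∀ i, X i)) y, q) ↔
          p = q ∧ ∃ g : G, ∀ i ∉ c p, g • x i = y i) ∧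
      ∃ act : MulAction G (Quotient (r1Setoid X P c)),
        (∀ (g : G) (x : ∀ i, X i) (p : P),
            act.smul g (Quotient.mk (r1Setoid X P c) (x, p)) =
              Quotient.mk (r1Setoid X P c) (g • x, p)) ∧
        ∃ h : Quotient s₂ ≃ₜ
            Quot (fun a b : Quotient (r1Setoid X P c) => ∃ g : G, act.smul g a = b),
          ∀ (x : ∀ i, X i) (p : P),
            h (Quotient.mk s₂ (Quotient.mk (MulAction.orbitRel G (∀ i, X i)) x, p)) =
              Quot.mk _ (Quotient.mk (r1Setoid X P c) (x, p)) :=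
  ⟨s2Setoid G X P c, fun x y p q => s2Setoid_iff x y p q, r1Act G X P c,
    fun _ _ _ => rfl, djHomeo G X P c, fun _ _ => rfl⟩
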